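/- With X = (ω+1) × ω and 𝓣 as above (the balls B_{m,k}, the doubletons {(ω,k),(ω,ℓ)} for k ≠ ℓ, and X), the ball space (X, 𝓣) is spherically complete: every nonempty chain in 𝓣 under inclusion has nonempty intersection. -/
import Mathlib


/-- The ball `B_{m,k} = {(n,k) : m ≤ n ≤ ω} ∪ {(ω,ℓ) : k ≤ ℓ < ω}` in
`X = (ω+1) × ω`, modelled as `ℕ∞ × ℕ`. -/
def Bmk (m k : ℕ) : Set (ℕ∞ × ℕ) :=
  {p | (p.2 = k ∧ (m : ℕ∞) ≤ p.1) ∨ (p.1 = ⊤ ∧ k ≤ p.2)}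

/-- The family `𝓣`: all balls `B_{m,k}`, all doubletons `{(ω,k),(ω,ℓ)}` with
`k ≠ ℓ`, and `X` itself. -/
def Tfam : Set (Set (ℕ∞ × ℕ)) :=
  {s | ∃ m k : ℕ, s = Bmk m k} ∪
    {s | ∃ k l : ℕ, k ≠ l ∧ s = {((⊤ : ℕ∞), k), ((⊤ : ℕ∞), l)}} ∪
    {Set.univ}

lemma top_mem_Bmk {m k n : ℕ} (h : k ≤ n) : ((⊤ : ℕ∞), n) ∈ Bmk m k :=
  Or.inr ⟨rfl, h⟩

lemma cast_mem_Bmk (m k : ℕ) : (((m : ℕ∞), k)) ∈ Bmk m k :=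
  Or.inl ⟨rfl, le_refl _⟩

lemma cast_not_mem_pair {m k a b : ℕ}
    (h : (((m : ℕ∞), k)) ∈ ({((⊤ : ℕ∞), a), ((⊤ : ℕ∞), b)} : Set (ℕ∞ × ℕ))) : False := by
  rcases h with h | h <;>
    exact absurd (congrArg Prod.fst h) (by simp)

lemma Bmk_subset {m k m' k' : ℕ} (h : Bmk m k ⊆ Bmk m' k') : k = k' := by
  have hm := h (cast_mem_Bmk m k)
  rcases hm with ⟨h1, _⟩ | ⟨h1, _⟩
  · exact h1
  · exact absurd h1 (by simp)

/-- The ball space `(X, 𝓣)` is spherically complete. -/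
theorem Tfam_sphericallyComplete :
    ∀ C ⊆ Tfam, C.Nonempty → IsChain (· ⊆ ·) C → (⋂₀ C).Nonempty := by
  intro C hC hne hchain
  by_cases hd : ∃ k l : ℕ, k ≠ l ∧
      ({((⊤ : ℕ∞), k), ((⊤ : ℕ∞), l)} : Set (ℕ∞ × ℕ)) ∈ C
  · -- a doubleton D is in C; it is contained in every member
    obtain ⟨k, l, hkl, hD⟩ := hd
    refine ⟨((⊤ : ℕ∞), k), fun s hs => ?_⟩
    rcases hchain.total hs hD with hsub | hsub
    · -- s ⊆ D : analyse s
      rcases hC hs with (⟨m', k', rfl⟩ | ⟨a, b, hab, rfl⟩) | hu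
      · exact absurd (hsub (cast_mem_Bmk m' k')) cast_not_mem_pair
      · -- doubleton inside doubleton: must contain (⊤,k)
        have ha := hsub (Set.mem_insert _ _)
        have hb := hsub (Set.mem_insert_of_mem _ rfl)
        simp only [Set.mem_insert_iff, Set.mem_singleton_iff, Prod.mk.injEq] at ha hb
        rcases ha with ⟨_, rfl⟩ | ⟨_, rfl⟩
        · exact Set.mem_insert _ _
        · rcases hb with ⟨_, rfl⟩ | ⟨_, rfl⟩
          · exact Set.mem_insert_of_mem _ rfl
          · exact absurd rfl hab
      · simp only [Set.mem_singleton_iff] at hu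
        subst hu
        exact absurd (hsub (Set.mem_univ (((0 : ℕ∞), 0)))) cast_not_mem_pair
    · exact hsub (Set.mem_insert _ _)
  · by_cases hb : ∃ m k : ℕ, Bmk m k ∈ C
    · obtain ⟨m0, k0, hB⟩ := hb
      refine ⟨((⊤ : ℕ∞), k0), fun s hs => ?_⟩
      rcases hC hs with (⟨m', k', rfl⟩ | ⟨a, b, hab, rfl⟩) | hu
      · -- another ball: same second index
        rcases hchain.total hs hB with hsub | hsub
        · exact top_mem_Bmk (Bmk_subset hsub).le
        · exact top_mem_Bmk (Bmk_subset hsub).ge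
      · exact absurd ⟨a, b, hab, hs⟩ hd
      · simp only [Set.mem_singleton_iff] at hu
        subst hu
        exact Set.mem_univ _
    · -- every member of C is univ
      refine ⟨((⊤ : ℕ∞), 0), fun s hs => ?_⟩
      rcases hC hs with (⟨m', k', rfl⟩ | ⟨a, b, hab, rfl⟩) | hu
      · exact absurd ⟨m', k', hs⟩ hb
      · exact absurd ⟨a, b, hab, hs⟩ hd
      · simp only [Set.mem_singleton_iff] at hu
        subst hu
        exact Set.mem_univ _
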